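/- For every n ≥ 2 there exists a first-order sentence φ in the language with a single binary relation symbol such that for every finite structure in this language, with underlying set V and interpreted relation R : V → V → Prop, the structure satisfies φ if and only if every repair of R contains a walk of length n. (Consistent answering of every path query is first-order rewritable.) -/

import Mathlib

open FirstOrder

/-- A relation is consistent (satisfies the key constraint on the first attribute)
if it is functional. -/
def Consistent {V : Type*} (R : V → V → Prop) : Prop :=
  ∀ a b b', R a b → R a b' → b = b'

/-- `D` is a (subset) repair of `R`: a maximal consistent subrelation of `R`. -/
def Repair {V : Type*} (R D : V → V → Prop) : Prop :=
  (∀ a b, D a b → R a b) ∧ Consistent D ∧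
  ∀ D' : V → V → Prop, Consistent D' → (∀ a b, D a b → D' a b) →
    (∀ a b, D' a b → R a b) → D' = D

/-- A walk of length `n` in `D`: a map `f : Fin (n+1) → V` with `D (f i) (f (i+1))`
for all `i < n`. -/
def IsWalk {V : Type*} (D : V → V → Prop) (n : ℕ) (f : Fin (n + 1) → V) : Prop :=
  ∀ i : Fin n, D (f i.castSucc) (f i.succ)

/-- The structure in the language of a single binary relation symbol given by interpreting
the relation symbol as `R`. -/
def relStructure {V : Type*} (R : V → V → Prop) : Language.graph.Structure V where
  RelMap | .adj => fun x => R (x 0) (x 1)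


namespace Stmt13Aux

open Language

/-- Syntactic "shallow level" formulas. -/
def bF : ℕ → Language.graph.BoundedFormula Empty 1
  | 0 => ∼(∃' (Language.adj.boundedFormula₂ (&0) (&1)))
  | (i+1) => bF i ⊔ ∃' ((Language.adj.boundedFormula₂ (&0) (&1)) ⊓ ((bF i).liftAt 1 0))

/-- Semantic counterpart. -/
def Bp {V : Type*} (R : V → V → Prop) : ℕ → V → Prop
  | 0 => fun v => ¬ ∃ y, R v y
  | (i+1) => fun v => Bp R i v ∨ ∃ y, R v y ∧ Bp R i y

lemma relMap_adj {V : Type*} (R : V → V → Prop) (x : Fin 2 → V) :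
    (relStructure R).RelMap Language.adj x = R (x 0) (x 1) := rfl

lemma realize_bF {V : Type} (R : V → V → Prop) :
    ∀ (i : ℕ) (xs : Fin 1 → V),
      @Language.BoundedFormula.Realize Language.graph V (relStructure R) Empty 1 (bF i)
        Empty.elim xs ↔ Bp R i (xs 0) := by
  letI := relStructure R
  intro i
  induction i with
  | zero =>
    intro xs
    simp only [bF, Bp, BoundedFormula.realize_not, BoundedFormula.realize_ex,
      BoundedFormula.realize_rel₂, relMap_adj]
    exact Iff.rfl
  | succ i ih =>
    intro xs
    simp only [bF, Bp, BoundedFormula.realize_sup, BoundedFormula.realize_ex,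
      BoundedFormula.realize_inf, BoundedFormula.realize_rel₂, relMap_adj, ih]
    constructor
    · rintro (h | ⟨a, h1, h2⟩)
      · exact Or.inl h
      · refine Or.inr ⟨a, ?_, ?_⟩
        · convert h1 using 2 <;> simp [Fin.snoc, Term.realize]
        · rw [BoundedFormula.realize_liftAt (by norm_num)] at h2
          have := ih (Fin.snoc xs a ∘ fun i : Fin 1 => if (i : ℕ) < 0 then Fin.castAdd 1 i else Fin.addNat i 1)
          rw [this] at h2
          simpa [Fin.snoc] using h2
    · rintro (h | ⟨a, h1, h2⟩)
      · exact Or.inl h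
      · refine Or.inr ⟨a, ?_, ?_⟩
        · simpa [Fin.snoc, Term.realize] using h1
        · rw [BoundedFormula.realize_liftAt (by norm_num), ih]
          simpa [Fin.snoc] using h2
end Stmt13Aux

namespace Stmt13Aux

lemma Bp_mono {V : Type*} {R : V → V → Prop} {i j : ℕ} (h : i ≤ j) {v : V}
    (hv : Bp R i v) : Bp R j v := by
  induction j with
  | zero =>
    have : i = 0 := by omega
    subst this; exact hv
  | succ j ih =>
    rcases Nat.lt_or_ge i (j+1) with h' | h'
    · exact Or.inl (ih (by omega))
    · have : i = j + 1 := by omega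
      subst this; exact hv

lemma repair_total {V : Type*} {R D : V → V → Prop} (hD : Repair R D) {a : V}
    (ha : ∃ b, R a b) : ∃ b, D a b := by
  by_contra h
  push_neg at h
  obtain ⟨b, hb⟩ := ha
  set D' : V → V → Prop := fun x y => D x y ∨ (x = a ∧ y = b) with hD'def
  have hcon : Consistent D' := by
    rintro x y y' (hy | ⟨rfl, rfl⟩) (hy' | ⟨he, rfl⟩)
    · exact hD.2.1 x y y' hy hy'
    · subst he; exact absurd hy (h _)
    · exact absurd hy' (h y')
    · rfl
  have := hD.2.2 D' hcon (fun x y hxy => Or.inl hxy)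
    (by rintro x y (hy | ⟨rfl, rfl⟩); exacts [hD.1 x y hy, hb])
  have hb' : D' a b := Or.inr ⟨rfl, rfl⟩
  rw [this] at hb'
  exact h b hb'

lemma step {V : Type*} {R D : V → V → Prop} (hD : Repair R D) {i : ℕ} {u : V}
    (hu : ¬ Bp R (i+1) u) : ∃ w, D u w ∧ ¬ Bp R i w := by
  have hdom : ∃ y, R u y := by
    by_contra hd
    exact hu (Bp_mono (Nat.zero_le _) hd)
  obtain ⟨w, hw⟩ := repair_total hD hdom
  refine ⟨w, hw, fun hbw => hu (Or.inr ⟨w, hD.1 u w hw, hbw⟩)⟩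

lemma chain {V : Type*} {R D : V → V → Prop} (hD : Repair R D) :
    ∀ (k : ℕ) (v : V), ¬ Bp R k v → ∃ g : ℕ → V, g 0 = v ∧ ∀ j ≤ k, D (g j) (g (j+1)) := by
  intro k
  induction k with
  | zero =>
    intro v hv
    have hdom : ∃ y, R v y := by simpa [Bp] using hv
    obtain ⟨w, hw⟩ := repair_total hD hdom
    refine ⟨fun j => if j = 0 then v else w, rfl, ?_⟩
    intro j hj
    interval_cases j
    simpa using hw
  | succ k ih =>
    intro v hv
    obtain ⟨w, hw, hbw⟩ := step hD hv
    obtain ⟨g, hg0, hg⟩ := ih w hbw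
    refine ⟨fun j => if j = 0 then v else g (j - 1), rfl, ?_⟩
    intro j hj
    match j with
    | 0 => simpa [hg0] using hw
    | (m+1) => simpa using hg m (by omega)

end Stmt13Aux

namespace Stmt13Aux

@[simp] lemma Bp_zero {V : Type*} (R : V → V → Prop) (v : V) :
    Bp R 0 v ↔ ¬ ∃ y, R v y := Iff.rfl

@[simp] lemma Bp_succ {V : Type*} (R : V → V → Prop) (i : ℕ) (v : V) :
    Bp R (i+1) v ↔ Bp R i v ∨ ∃ y, R v y ∧ Bp R i y := Iff.rfl

lemma exists_repair_no_walk {V : Type*} {R : V → V → Prop} {k n : ℕ}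
    (hall : ∀ v, Bp R k v) (hkn : k < n) :
    ∃ D : V → V → Prop, Repair R D ∧ ∀ f : Fin (n+1) → V, ¬ IsWalk D n f := by
  classical
  have hex : ∀ v : V, ∃ i, Bp R i v := fun v => ⟨k, hall v⟩
  have H : ∀ a : V, (∃ y, R a y) → ∃ y, R a y ∧ Nat.find (hex y) < Nat.find (hex a) := by
    intro a ha
    have hspec : Bp R (Nat.find (hex a)) a := Nat.find_spec (hex a)
    have hpos : Nat.find (hex a) ≠ 0 := by
      intro h0
      rw [h0, Bp_zero] at hspec
      exact hspec ha
    obtain ⟨s, hs⟩ := Nat.exists_eq_succ_of_ne_zero hpos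
    rw [hs, Bp_succ] at hspec
    rcases hspec with h | ⟨y, hy, hby⟩
    · exact absurd h (Nat.find_min (hex a) (by omega))
    · exact ⟨y, hy, lt_of_le_of_lt (Nat.find_le hby) (by omega)⟩
  set D : V → V → Prop := fun a b => ∃ h : ∃ y, R a y, b = (H a h).choose with hDdef
  have hsub : ∀ a b, D a b → R a b := by rintro a b ⟨h, rfl⟩; exact (H a h).choose_spec.1
  have hcon : Consistent D := by rintro a b b' ⟨h, rfl⟩ ⟨h', rfl⟩; rfl
  have hrep : Repair R D := by
    refine ⟨hsub, hcon, fun D' hc' hsub' hsubR' => ?_⟩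
    funext a b
    apply propext
    constructor
    · intro hab
      have ha : ∃ y, R a y := ⟨b, hsubR' a b hab⟩
      have h1 : D' a (H a ha).choose := hsub' _ _ ⟨ha, rfl⟩
      exact ⟨ha, hc' a b _ hab h1⟩
    · exact hsub' a b
  refine ⟨D, hrep, fun f hf => ?_⟩
  set x : ℕ → V := fun m => f ⟨min m n, Nat.lt_succ_of_le (Nat.min_le_right m n)⟩ with hxdef
  have hstep : ∀ m, m < n → Nat.find (hex (x (m+1))) < Nat.find (hex (x m)) := by
    intro m hm
    have hedge := hf ⟨m, hm⟩
    have e1 : f ((⟨m, hm⟩ : Fin n).castSucc) = x m := by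
      apply congrArg f; apply Fin.ext; simp [hxdef]; omega
    have e2 : f ((⟨m, hm⟩ : Fin n).succ) = x (m+1) := by
      apply congrArg f; apply Fin.ext; simp [hxdef]; omega
    rw [e1, e2] at hedge
    obtain ⟨h, heq⟩ := hedge
    have := (H _ h).choose_spec.2
    rwa [← heq] at this
  have key : ∀ m, m ≤ n → m + Nat.find (hex (x m)) ≤ Nat.find (hex (x 0)) := by
    intro m
    induction m with
    | zero => intro _; omega
    | succ m ih =>
      intro hm
      have h1 := hstep m (by omega)
      have h2 := ih (by omega)
      omega
  have hk0 : Nat.find (hex (x 0)) ≤ k := Nat.find_le (hall (x 0))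
  have := key n le_rfl
  omega

end Stmt13Aux

theorem stmt13 (n : ℕ) (hn : 2 ≤ n) :
    ∃ φ : Language.graph.Sentence,
      ∀ (V : Type) (_ : Fintype V) (R : V → V → Prop),
        (@FirstOrder.Language.Sentence.Realize Language.graph V (relStructure R) φ) ↔
        (∀ D : V → V → Prop, Repair R D → ∃ f : Fin (n + 1) → V, IsWalk D n f) := by
  classical
  obtain ⟨m, rfl⟩ : ∃ m, n = m + 2 := ⟨n - 2, by omega⟩
  refine ⟨∃' ∼(Stmt13Aux.bF (m+1)), fun V _ R => ?_⟩
  letI := relStructure R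
  have hreal : (@FirstOrder.Language.Sentence.Realize Language.graph V (relStructure R)
      (∃' ∼(Stmt13Aux.bF (m+1)))) ↔ ∃ v : V, ¬ Stmt13Aux.Bp R (m+1) v := by
    rw [Language.Sentence.Realize, Language.Formula.Realize]
    rw [Language.BoundedFormula.realize_ex]
    constructor
    · rintro ⟨a, ha⟩
      rw [Language.BoundedFormula.realize_not] at ha
      refine ⟨a, fun hb => ha ?_⟩
      have := Stmt13Aux.realize_bF R (m+1) (Fin.snoc default a)
      rw [show (Empty.elim : Empty → V) = default from funext (fun e => e.elim)] at this
      rw [this]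
      simpa [Fin.snoc] using hb
    · rintro ⟨v, hv⟩
      refine ⟨v, ?_⟩
      rw [Language.BoundedFormula.realize_not]
      intro hb
      have := Stmt13Aux.realize_bF R (m+1) (Fin.snoc default v)
      rw [show (Empty.elim : Empty → V) = default from funext (fun e => e.elim)] at this
      rw [this] at hb
      exact hv (by simpa [Fin.snoc] using hb)
  rw [hreal]
  constructor
  · rintro ⟨v, hv⟩ D hD
    obtain ⟨g, hg0, hg⟩ := Stmt13Aux.chain hD (m+1) v hv
    refine ⟨fun i => g i, fun i => hg i ?_⟩
    omega
  · intro h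
    by_contra hc
    push_neg at hc
    have hall : ∀ v, Stmt13Aux.Bp R (m+1) v := hc
    obtain ⟨D, hD, hno⟩ := Stmt13Aux.exists_repair_no_walk hall (show m+1 < m+2 by omega)
    obtain ⟨f, hf⟩ := h D hD
    exact hno f hf
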